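/- Let (W,S) be a finite Coxeter system and let w ∈ W with ℓ(w) = n ≥ 1. Then for every integer k with 0 < k < n, the number of v ∈ W with v ≤ w and ℓ(v) = k is at least 2. Consequently, the Poincaré polynomial P_w(q) = Σ_{v ≤ w} q^{ℓ(v)} satisfies 1 + 2(q + q² + ⋯ + q^{n−1}) + q^n ≤ P_w(q) coefficientwise, and the lower interval [e,w] has cardinality at least 2n. -/

import Mathlib

open Polynomial

/-- A Bruhat edge `u → v`: `v = u * t` for some reflection `t`, and `ℓ(u) < ℓ(v)`. -/
def BruhatEdge {B W : Type*} [Group W] {M : CoxeterMatrix B}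
    (cs : CoxeterSystem M W) (u v : W) : Prop :=
  ∃ t : W, cs.IsReflection t ∧ v = u * t ∧ cs.length u < cs.length v

/-- Bruhat order: the reflexive-transitive closure of the Bruhat edge relation. -/
def BruhatLE {B W : Type*} [Group W] {M : CoxeterMatrix B}
    (cs : CoxeterSystem M W) : W → W → Prop :=
  Relation.ReflTransGen (BruhatEdge cs)

/-- The defining properties of the family of `R`-polynomials. -/
def IsRFamily {B W : Type*} [Group W] {M : CoxeterMatrix B}
    (cs : CoxeterSystem M W) (R : W → W → Polynomial ℤ) : Prop :=
  (∀ u w, ¬ BruhatLE cs u w → R u w = 0) ∧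
  (∀ w, R w w = 1) ∧
  (∀ u w, ∀ i : B, cs.length (w * cs.simple i) < cs.length w →
    (cs.length (u * cs.simple i) < cs.length u →
      R u w = R (u * cs.simple i) (w * cs.simple i)) ∧
    (cs.length u < cs.length (u * cs.simple i) →
      R u w = (X - 1) * R u (w * cs.simple i)
        + X * R (u * cs.simple i) (w * cs.simple i)))

/-- The defining properties of the family of `R̃`-polynomials. -/
def IsRTildeFamily {B W : Type*} [Group W] {M : CoxeterMatrix B}
    (cs : CoxeterSystem M W) (Rt : W → W → Polynomial ℕ) : Prop :=
  (∀ u w, ¬ BruhatLE cs u w → Rt u w = 0) ∧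
  (∀ w, Rt w w = 1) ∧
  (∀ u w, ∀ i : B, cs.length (w * cs.simple i) < cs.length w →
    (cs.length (u * cs.simple i) < cs.length u →
      Rt u w = Rt (u * cs.simple i) (w * cs.simple i)) ∧
    (cs.length u < cs.length (u * cs.simple i) →
      Rt u w = X * Rt u (w * cs.simple i)
        + Rt (u * cs.simple i) (w * cs.simple i)))

/-- Dihedral polynomials. -/
noncomputable def dPoly : ℕ → Polynomial ℤ
  | 0 => 1
  | 1 => X
  | 2 => X ^ 2
  | (n + 3) => X * dPoly (n + 2) + (X + 1) * dPoly (n + 1)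

/-- The degree of a vertex `x` in the Bruhat graph on the vertex set `V`:
the total number of incident edges (incoming plus outgoing). -/
noncomputable def degIn {B W : Type*} [Group W] {M : CoxeterMatrix B}
    (cs : CoxeterSystem M W) (V : Set W) (x : W) : ℕ :=
  Nat.card {y : W // y ∈ V ∧ (BruhatEdge cs x y ∨ BruhatEdge cs y x)}

/-- The Bruhat graph on the vertex set `V` is regular: all vertices have the same degree. -/
def IsRegularOn {B W : Type*} [Group W] {M : CoxeterMatrix B}
    (cs : CoxeterSystem M W) (V : Set W) : Prop :=
  ∀ x ∈ V, ∀ y ∈ V, degIn cs V x = degIn cs V y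

open List

namespace Aux2
variable {B W : Type*} [Group W] {M : CoxeterMatrix B} (cs : CoxeterSystem M W)

local prefix:100 "ℓ" => cs.length
local prefix:100 "σ" => cs.simple
local prefix:100 "π" => cs.wordProd
local prefix:100 "ris" => cs.rightInvSeq

open Classical in
/-- Tits's reflection-parity permutation. -/
noncomputable def refPerm (i : B) : Equiv.Perm (W × ZMod 2) := by
  refine Equiv.mk
    (fun p => (σ i * p.1 * σ i, p.2 + if p.1 = σ i then 1 else 0))
    (fun p => (σ i * p.1 * σ i, p.2 + if p.1 = σ i then 1 else 0)) ?_ ?_ <;>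
  · intro ⟨t, e⟩
    have h1 : σ i * (σ i * t * σ i) * σ i = t := by
      simp [← mul_assoc, cs.simple_mul_simple_self]
    have h2 : (σ i * t * σ i = σ i) ↔ (t = σ i) := by
      constructor
      · intro h
        have := congrArg (fun x => σ i * x * σ i) h
        simpa [← mul_assoc, cs.simple_mul_simple_self] using this
      · rintro rfl; simp [cs.simple_mul_simple_self]
    simp only [h1, h2]
    rcases _root_.em (t = σ i) with h | h <;> simp [h, add_assoc, CharTwo.add_self_eq_zero]

open Classical in
theorem refPerm_apply (i : B) (t : W) (e : ZMod 2) :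
    refPerm cs i (t, e) = (σ i * t * σ i, e + if t = σ i then 1 else 0) := rfl

open Classical in
theorem refPerm_pow (i i' : B) (k : ℕ) (t : W) (e : ZMod 2) :
    ((refPerm cs i * refPerm cs i') ^ k) (t, e) =
      ((σ i * σ i') ^ k * t * ((σ i * σ i') ^ k)⁻¹,
        e + ∑ j ∈ Finset.range k,
          ((if t = σ i' * (σ i * σ i') ^ (2 * j) then (1 : ZMod 2) else 0)
            + if t = σ i' * (σ i * σ i') ^ (2 * j + 1) then 1 else 0)) := by
  set p := σ i * σ i' with hp
  have hqpq : σ i' * p * σ i' = p⁻¹ := by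
    rw [hp, mul_inv_rev, cs.inv_simple, cs.inv_simple, ← mul_assoc,
      cs.simple_mul_simple_cancel_right]
  have hqpk : ∀ k : ℕ, σ i' * p ^ k * σ i' = (p ^ k)⁻¹ := by
    intro k
    have h0 := conj_pow (i := k) (a := σ i') (b := p)
    rw [cs.inv_simple] at h0
    rw [← h0, hqpq, inv_pow]
  have hcomm : ∀ k : ℕ, (p ^ k)⁻¹ * σ i' = σ i' * p ^ k := by
    intro k
    rw [← hqpk k, mul_assoc, cs.simple_mul_simple_self, mul_one]
  induction k with
  | zero => simp
  | succ k ih =>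
      rw [pow_succ', Equiv.Perm.mul_apply, ih, Equiv.Perm.mul_apply,
        refPerm_apply, refPerm_apply]
      have habc : ∀ t' c : W, (p ^ k * t' * (p ^ k)⁻¹ = c) ↔ (t' = (p ^ k)⁻¹ * c * p ^ k) := by
        intro t' c
        constructor
        · intro h; rw [← h]; group
        · intro h; rw [h]; group
      have hval1 : (p ^ k)⁻¹ * σ i' * p ^ k = σ i' * p ^ (2 * k) := by
        rw [hcomm k, mul_assoc, ← pow_add, two_mul]
      have key1 : (p ^ k * t * (p ^ k)⁻¹ = σ i') ↔ (t = σ i' * p ^ (2 * k)) := by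
        rw [habc, hval1]
      have key2 : (σ i' * (p ^ k * t * (p ^ k)⁻¹) * σ i' = σ i)
          ↔ (t = σ i' * p ^ (2 * k + 1)) := by
        have hiff : (σ i' * (p ^ k * t * (p ^ k)⁻¹) * σ i' = σ i)
            ↔ (p ^ k * t * (p ^ k)⁻¹ = σ i' * σ i * σ i') := by
          constructor
          · intro h
            have h2 := congrArg (fun x => σ i' * x * σ i') h
            rw [← h2]
            simp only [← mul_assoc, cs.simple_mul_simple_cancel_left]
            rw [mul_assoc, mul_assoc, mul_assoc]
            rw [cs.simple_mul_simple_self, mul_one]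
          · intro h
            rw [h]
            simp only [← mul_assoc, cs.simple_mul_simple_cancel_left]
            rw [cs.simple_mul_simple_cancel_right]
        have h3 : σ i' * σ i * σ i' = p⁻¹ * σ i' := by
          rw [hp, mul_inv_rev, cs.inv_simple, cs.inv_simple]
        have harith : k + 1 + k = 2 * k + 1 := by ring
        have hval2 : (p ^ k)⁻¹ * (p⁻¹ * σ i') * p ^ k = σ i' * p ^ (2 * k + 1) := by
          rw [← mul_assoc, ← mul_inv_rev, ← pow_succ', hcomm (k + 1), mul_assoc,
            ← pow_add, harith]
        rw [hiff, h3, habc, hval2]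
      rw [Finset.sum_range_succ]
      refine Prod.ext ?_ ?_
      · show σ i * (σ i' * (p ^ k * t * (p ^ k)⁻¹) * σ i') * σ i = _
        have e1 : σ i * (σ i' * (p ^ k * t * (p ^ k)⁻¹) * σ i') * σ i
            = p * (p ^ k * t * (p ^ k)⁻¹) * p⁻¹ := by
          rw [hp, mul_inv_rev, cs.inv_simple, cs.inv_simple]
          simp only [mul_assoc]
        rw [e1, pow_succ' p k, mul_inv_rev p (p ^ k)]
        simp only [mul_assoc]
      · show (e + _) + _ + _ = _
        simp only [key1, key2]
        push_cast
        ring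
end Aux2

namespace Aux2
variable {B W : Type*} [Group W] {M : CoxeterMatrix B} (cs : CoxeterSystem M W)

local prefix:100 "ℓ" => cs.length
local prefix:100 "σ" => cs.simple
local prefix:100 "π" => cs.wordProd
local prefix:100 "ris" => cs.rightInvSeq

open Classical in
theorem refPerm_liftable : M.IsLiftable (fun i => refPerm cs i) := by
  intro i i'
  set m := M i i' with hm
  have key : ∀ (t : W) (e : ZMod 2), ((refPerm cs i * refPerm cs i') ^ m) (t, e) = (t, e) := by
    intro t e
    rw [refPerm_pow]
    have hpm : (σ i * σ i') ^ m = 1 := cs.simple_mul_simple_pow i i'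
    set F : ℕ → ZMod 2 := fun k => if t = σ i' * (σ i * σ i') ^ k then 1 else 0 with hF
    have hA : ∀ N : ℕ, ∑ j ∈ Finset.range N, (F (2 * j) + F (2 * j + 1))
        = ∑ k ∈ Finset.range (2 * N), F k := by
      intro N
      induction N with
      | zero => simp
      | succ N ih =>
          rw [Finset.sum_range_succ, ih, show 2 * (N + 1) = 2 * N + 1 + 1 by ring,
            Finset.sum_range_succ, Finset.sum_range_succ]
          ring
    have hB : ∑ k ∈ Finset.range (2 * m), F k
        = ∑ k ∈ Finset.range m, F k + ∑ k ∈ Finset.range m, F (m + k) := by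
      rw [two_mul, Finset.sum_range_add]
    have hC : ∀ k, F (m + k) = F k := by
      intro k
      simp only [hF, pow_add, hpm, one_mul]
    have hsum : (∑ j ∈ Finset.range m, (F (2 * j) + F (2 * j + 1))) = 0 := by
      rw [hA, hB]
      simp only [hC]
      rw [CharTwo.add_self_eq_zero]
    refine Prod.ext ?_ ?_
    · show (σ i * σ i') ^ m * t * ((σ i * σ i') ^ m)⁻¹ = t
      rw [hpm]; simp
    · show e + _ = e
      rw [hsum, add_zero]
  apply Equiv.ext
  rintro ⟨t, e⟩
  rw [key, Equiv.Perm.one_apply]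

/-- The Tits homomorphism recording reflection parities. -/
noncomputable def titsHom : W →* Equiv.Perm (W × ZMod 2) :=
  cs.lift ⟨fun i => refPerm cs i, refPerm_liftable cs⟩

theorem titsHom_simple (i : B) : titsHom cs (σ i) = refPerm cs i :=
  cs.lift_apply_simple _ i

/-- The parity of the number of times `t` occurs in a right inversion sequence. -/
noncomputable def eta (w t : W) : ZMod 2 := (titsHom cs w (t, 0)).2

open Classical in
theorem titsHom_wordProd (ω : List B) (t : W) (e : ZMod 2) :
    titsHom cs (π ω) (t, e)
      = (π ω * t * (π ω)⁻¹, e + (List.count t (ris ω) : ZMod 2)) := by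
  induction ω generalizing t e with
  | nil => simp
  | cons i ω ih =>
      rw [cs.wordProd_cons, map_mul, Equiv.Perm.mul_apply, ih, titsHom_simple,
        refPerm_apply]
      have hris : ris (i :: ω) = ((π ω)⁻¹ * σ i * π ω) :: ris ω := rfl
      refine Prod.ext ?_ ?_
      · show σ i * (π ω * t * (π ω)⁻¹) * σ i = _
        rw [mul_inv_rev, cs.inv_simple]
        simp only [mul_assoc]
      · show e + _ + _ = _
        rw [hris, List.count_cons]
        have hiff : (π ω * t * (π ω)⁻¹ = σ i) ↔ ((π ω)⁻¹ * σ i * π ω = t) := by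
          constructor
          · intro h
            rw [← h]; group
          · intro h
            rw [← h]; group
        push_cast
        rw [add_assoc]
        congr 1
        simp only [hiff]
        rcases _root_.em ((π ω)⁻¹ * σ i * π ω = t) with h | h <;>
          simp [h, beq_iff_eq, add_comm]

theorem titsHom_apply (w t : W) (e : ZMod 2) :
    titsHom cs w (t, e) = (w * t * w⁻¹, e + eta cs w t) := by
  obtain ⟨ω, -, rfl⟩ := cs.exists_reduced_word' w
  rw [titsHom_wordProd]
  rw [eta, titsHom_wordProd]
  simp

open Classical in
theorem eta_eq_count (w t : W) (ω : List B) (hω : π ω = w) :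
    eta cs w t = (List.count t (ris ω) : ZMod 2) := by
  rw [eta, ← hω, titsHom_wordProd, zero_add]

theorem eta_cocycle (x y t : W) :
    eta cs (x * y) t = eta cs y t + eta cs x (y * t * y⁻¹) := by
  have h1 : titsHom cs (x * y) (t, 0) = titsHom cs x (titsHom cs y (t, 0)) := by
    rw [map_mul]; rfl
  rw [eta, h1, titsHom_apply cs y, titsHom_apply cs x, zero_add]

theorem eta_one (t : W) : eta cs 1 t = 0 := by
  rw [eta, map_one]; rfl

open Classical in
theorem eta_simple_self (i : B) : eta cs (σ i) (σ i) = 1 := by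
  rw [eta, titsHom_simple, refPerm_apply]
  simp

theorem eta_inv_conj (u : W) (i : B) : eta cs u⁻¹ (u * σ i * u⁻¹) = eta cs u (σ i) := by
  have h := eta_cocycle cs u⁻¹ u (σ i)
  rw [inv_mul_cancel, eta_one] at h
  have h2 : eta cs u⁻¹ (u * σ i * u⁻¹) = - eta cs u (σ i) :=
    eq_neg_of_add_eq_zero_right h.symm
  rw [h2, CharTwo.neg_eq]

theorem eta_reflection_self {t : W} (ht : cs.IsReflection t) : eta cs t t = 1 := by
  obtain ⟨u, j, rfl⟩ := ht
  have h1 : eta cs (u * σ j * u⁻¹) (u * σ j * u⁻¹)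
      = eta cs u⁻¹ (u * σ j * u⁻¹) + eta cs (u * σ j) (σ j) := by
    have h := eta_cocycle cs (u * σ j) u⁻¹ (u * σ j * u⁻¹)
    have harg : u⁻¹ * (u * σ j * u⁻¹) * u⁻¹⁻¹ = σ j := by group
    rw [harg] at h
    exact h
  have h2 : eta cs (u * σ j) (σ j) = 1 + eta cs u (σ j) := by
    have h := eta_cocycle cs u (σ j) (σ j)
    have harg : σ j * σ j * (σ j)⁻¹ = σ j := by
      rw [cs.inv_simple, cs.simple_mul_simple_cancel_right]
    rw [harg, eta_simple_self] at h
    rw [h]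
  rw [h1, h2, eta_inv_conj]
  have : ∀ a : ZMod 2, a + (1 + a) = 1 := by decide
  exact this _

end Aux2

namespace Aux2
variable {B W : Type*} [Group W] {M : CoxeterMatrix B} (cs : CoxeterSystem M W)

local prefix:100 "ℓ" => cs.length
local prefix:100 "σ" => cs.simple
local prefix:100 "π" => cs.wordProd
local prefix:100 "ris" => cs.rightInvSeq

open Classical in
theorem eta_eq_one_of_descent {w t : W} (ht : cs.IsReflection t)
    (hlt : ℓ (w * t) < ℓ w) : eta cs w t = 1 := by
  have dir : ∀ v : W, eta cs v t = 1 → ℓ (v * t) < ℓ v := by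
    intro v hv
    obtain ⟨ω, hred, hveq⟩ := cs.exists_reduced_word' v
    rw [eta_eq_count cs v t ω hveq.symm] at hv
    have hcount : List.count t (ris ω) ≠ 0 := by
      intro h0
      rw [h0] at hv
      simp at hv
    have hmem : t ∈ ris ω := by
      by_contra hmem
      exact hcount (List.count_eq_zero.mpr hmem)
    have := cs.isRightInversion_of_mem_rightInvSeq hred hmem
    rw [hveq]
    exact this.2
  by_contra hne
  have h01 : ∀ a : ZMod 2, a = 0 ∨ a = 1 := by decide
  have h0 : eta cs w t = 0 := (h01 _).resolve_right hne
  have hwt : eta cs (w * t) t = 1 := by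
    have h := eta_cocycle cs w t t
    have harg : t * t * t⁻¹ = t := by rw [ht.mul_self, one_mul, ht.inv]
    rw [harg, eta_reflection_self cs ht, h0, add_zero] at h
    exact h
  have := dir (w * t) hwt
  rw [mul_assoc, ht.mul_self, mul_one] at this
  omega

open Classical in
theorem strong_exchange {w t : W} (ht : cs.IsReflection t)
    (hlt : ℓ (w * t) < ℓ w) (ω : List B) (hω : π ω = w) :
    ∃ j < ω.length, π (ω.eraseIdx j) = w * t := by
  have h1 : eta cs w t = 1 := eta_eq_one_of_descent cs ht hlt
  rw [eta_eq_count cs w t ω hω] at h1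
  have hcount : List.count t (ris ω) ≠ 0 := by
    intro h0; rw [h0] at h1; simp at h1
  have hmem : t ∈ ris ω := by
    by_contra hmem
    exact hcount (List.count_eq_zero.mpr hmem)
  obtain ⟨j, hj, hget⟩ := List.mem_iff_getElem.mp hmem
  rw [cs.length_rightInvSeq] at hj
  refine ⟨j, hj, ?_⟩
  have := cs.wordProd_mul_getD_rightInvSeq ω j
  rw [List.getD_eq_getElem?_getD, List.getElem?_eq_getElem (by simpa using hj),
    Option.getD_some, hget, hω] at this
  rw [← this]

theorem exists_delete_two (ω : List B) (h : ¬ cs.IsReduced ω) :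
    ∃ τ, τ <+ ω ∧ τ.length + 2 = ω.length ∧ π τ = π ω := by
  -- find first descent position
  have hstep : ∀ j, (hj : j < ω.length) → π (ω.take (j + 1)) = π (ω.take j) * σ (ω[j]'hj) := by
    intro j hj
    conv_lhs => rw [List.take_succ]
    rw [List.getElem?_eq_getElem hj]
    rw [Option.toList_some, cs.wordProd_append, cs.wordProd_singleton]
  have hfind : ∃ j, j < ω.length ∧ ℓ (π (ω.take (j + 1))) < ℓ (π (ω.take j)) := by
    by_contra hcon
    push_neg at hcon
    have hall : ∀ j, j ≤ ω.length → ℓ (π (ω.take j)) = j := by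
      intro j
      induction j with
      | zero => simp
      | succ j ihj =>
          intro hj1
          have hj : j < ω.length := by omega
          have h1 := ihj (by omega)
          have h2 := hcon j hj
          rcases cs.length_mul_simple (π (ω.take j)) (ω[j]) with hc | hc
          · rw [hstep j hj, hc, h1]
          · rw [hstep j hj] at h2 ⊢
            omega
    have := hall ω.length (le_refl _)
    rw [List.take_length] at this
    exact h this
  obtain ⟨j, hj, hdesc⟩ := hfind
  rw [hstep j hj] at hdesc
  obtain ⟨j', hj', hdel⟩ := strong_exchange cs (cs.isReflection_simple (ω[j]))
    hdesc (ω.take j) rfl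
  rw [List.length_take] at hj'
  have hj'j : j' < j := lt_of_lt_of_le hj' (min_le_left _ _)
  refine ⟨(ω.take j).eraseIdx j' ++ ω.drop (j + 1), ?_, ?_, ?_⟩
  · have h1 : (ω.take j).eraseIdx j' <+ ω.take j := List.eraseIdx_sublist _ _
    have h2 : ω.drop (j + 1) <+ ω[j] :: ω.drop (j + 1) := List.sublist_cons_self _ _
    have h3 : ω.drop j = ω[j] :: ω.drop (j + 1) := List.drop_eq_getElem_cons hj
    calc (ω.take j).eraseIdx j' ++ ω.drop (j + 1)
        <+ ω.take j ++ (ω[j] :: ω.drop (j + 1)) := List.Sublist.append h1 h2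
      _ = ω.take j ++ ω.drop j := by rw [h3]
      _ = ω := List.take_append_drop _ _
  · have hlt2 : j' < (ω.take j).length := by rw [List.length_take]; omega
    rw [List.length_append, List.length_eraseIdx, if_pos hlt2, List.length_take,
      List.length_drop]
    omega
  · rw [cs.wordProd_append, hdel]
    conv_rhs => rw [← List.take_append_drop (j + 1) ω]
    rw [cs.wordProd_append, hstep j hj]

theorem exists_reduced_sublist (ω : List B) :
    ∃ τ, τ <+ ω ∧ cs.IsReduced τ ∧ π τ = π ω := by
  generalize hn : ω.length = n
  induction n using Nat.strong_induction_on generalizing ω with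
  | _ n ih =>
    by_cases h : cs.IsReduced ω
    · exact ⟨ω, List.Sublist.refl _, h, rfl⟩
    · obtain ⟨τ, hsub, hlen, hprod⟩ := exists_delete_two cs ω h
      obtain ⟨τ', hsub', hred', hprod'⟩ := ih τ.length (by omega) τ rfl
      exact ⟨τ', hsub'.trans hsub, hred', hprod'.trans hprod⟩

end Aux2

namespace Aux2
variable {B W : Type*} [Group W] {M : CoxeterMatrix B} (cs : CoxeterSystem M W)

local prefix:100 "ℓ" => cs.length
local prefix:100 "σ" => cs.simple
local prefix:100 "π" => cs.wordProd
local infix:50 " ≼ " => BruhatLE cs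

theorem ble_refl (w : W) : w ≼ w := Relation.ReflTransGen.refl

theorem ble_trans {u v w : W} (h1 : u ≼ v) (h2 : v ≼ w) : u ≼ w := h1.trans h2

theorem length_le_of_le {u w : W} (h : u ≼ w) : ℓ u ≤ ℓ w := by
  induction h with
  | refl => exact Nat.le_refl _
  | tail _ h ih => exact ih.trans (Nat.le_of_lt (by obtain ⟨t, _, _, hl⟩ := h; exact hl))

theorem eq_of_le_of_length_ge {u w : W} (h : u ≼ w) (hl : ℓ w ≤ ℓ u) : u = w := by
  cases (Relation.ReflTransGen.cases_tail h) with
  | inl h' => exact h'.symm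
  | inr h' =>
      obtain ⟨c, hc, t, _, rfl, hlt⟩ := h'
      have := length_le_of_le cs hc
      omega

theorem le_of_reflection_mul_lt {w t : W} (ht : cs.IsReflection t)
    (hl : ℓ (w * t) < ℓ w) : (w * t) ≼ w := by
  refine Relation.ReflTransGen.single ⟨t, ht, ?_, hl⟩
  rw [mul_assoc, ht.mul_self, mul_one]

theorem le_mul_simple {w : W} {i : B} (hl : ℓ w < ℓ (w * σ i)) : w ≼ w * σ i :=
  Relation.ReflTransGen.single ⟨σ i, cs.isReflection_simple i, rfl, hl⟩

theorem mul_simple_le {w : W} {i : B} (hl : ℓ (w * σ i) < ℓ w) : (w * σ i) ≼ w :=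
  le_of_reflection_mul_lt cs (cs.isReflection_simple i) hl

theorem edge_le {u w : W} (h : BruhatEdge cs u w) : u ≼ w :=
  Relation.ReflTransGen.single h

theorem simple_lt_dichotomy (w : W) (i : B) :
    ℓ w < ℓ (w * σ i) ∨ ℓ (w * σ i) < ℓ w := by
  rcases cs.length_mul_simple w i with h | h <;> omega

open Classical in
noncomputable def umax (i : B) (v : W) : W := if ℓ (v * σ i) < ℓ v then v else v * σ i

open Classical in
noncomputable def umin (i : B) (v : W) : W := if ℓ (v * σ i) < ℓ v then v * σ i else v

open Classical in
theorem umax_of_lt {i : B} {v : W} (h : ℓ (v * σ i) < ℓ v) : umax cs i v = v := if_pos h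

open Classical in
theorem umax_of_gt {i : B} {v : W} (h : ℓ v < ℓ (v * σ i)) : umax cs i v = v * σ i :=
  if_neg (by omega)

open Classical in
theorem umin_of_lt {i : B} {v : W} (h : ℓ (v * σ i) < ℓ v) : umin cs i v = v * σ i :=
  if_pos h

open Classical in
theorem umin_of_gt {i : B} {v : W} (h : ℓ v < ℓ (v * σ i)) : umin cs i v = v :=
  if_neg (by omega)

theorem le_umax (i : B) (v : W) : v ≼ umax cs i v := by
  rcases simple_lt_dichotomy cs v i with h | h
  · rw [umax_of_gt cs h]; exact le_mul_simple cs h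
  · rw [umax_of_lt cs h]
    exact ble_refl cs v

theorem umin_le (i : B) (v : W) : umin cs i v ≼ v := by
  rcases simple_lt_dichotomy cs v i with h | h
  · rw [umin_of_gt cs h]
    exact ble_refl cs v
  · rw [umin_of_lt cs h]; exact mul_simple_le cs h

theorem sublist_single {α : Type*} {l : List α} {a : α} (h : l <+ [a]) :
    l = [] ∨ l = [a] := by
  rw [List.sublist_cons_iff] at h
  rcases h with h | ⟨r, rfl, hr⟩
  · exact Or.inl (List.sublist_nil.mp h)
  · rw [List.sublist_nil.mp hr]
    exact Or.inr rfl

theorem master : ∀ n : ℕ, ∀ w : W, ℓ w = n →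
    ((∀ ω : List B, π ω = w → cs.IsReduced ω → ∀ τ, τ <+ ω → π τ ≼ w)
    ∧ (∀ i : B, ∀ v : W, v ≼ w → umax cs i v ≼ umax cs i w)
    ∧ (∀ i : B, ∀ v : W, v ≼ w → umin cs i v ≼ umin cs i w)) := by
  intro n
  induction n using Nat.strong_induction_on with
  | _ n ih =>
  intro w hw
  have ihS : ∀ w' : W, ℓ w' < n → ∀ ω : List B, π ω = w' → cs.IsReduced ω →
      ∀ τ, τ <+ ω → π τ ≼ w' := fun w' h => (ih _ h w' rfl).1
  have ihMax : ∀ w' : W, ℓ w' < n → ∀ i : B, ∀ v : W, v ≼ w' →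
      umax cs i v ≼ umax cs i w' := fun w' h => (ih _ h w' rfl).2.1
  have ihMin : ∀ w' : W, ℓ w' < n → ∀ i : B, ∀ v : W, v ≼ w' →
      umin cs i v ≼ umin cs i w' := fun w' h => (ih _ h w' rfl).2.2
  have hS : ∀ ω : List B, π ω = w → cs.IsReduced ω → ∀ τ, τ <+ ω → π τ ≼ w := by
    intro ω hω hred τ hsub
    obtain ⟨τ₀, hsub₀, hred₀, hprod₀⟩ := exists_reduced_sublist cs τ
    rw [← hprod₀]
    have hsub' : τ₀ <+ ω := hsub₀.trans hsub
    clear hsub hsub₀ hprod₀ τ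
    rcases ω.eq_nil_or_concat with rfl | ⟨ω', i, rfl⟩
    · rw [List.sublist_nil.mp hsub', ← hω]
      exact ble_refl cs _
    · -- ω = ω' ++ [i]
      rw [List.concat_eq_append] at hω hred hsub'
      have hω'red : cs.IsReduced ω' := by
        have := CoxeterSystem.IsReduced.take hred (j := ω'.length)
        rwa [List.take_left] at this
      set b := π ω' with hb
      have hwprod : w = b * σ i := by rw [← hω, cs.wordProd_append, cs.wordProd_singleton]
      have hlenw : ℓ w = ω'.length + 1 := by
        rw [← hω, hred]
        simp
      have hlenb : ℓ b = ω'.length := hω'red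
      have hblt : ℓ b < ℓ w := by omega
      have hble : b ≼ w := by
        rw [hwprod]
        exact le_mul_simple cs (by rw [← hwprod]; omega)
      rcases List.sublist_append_iff.mp hsub' with ⟨a, b', rfl, ha, hb'⟩
      rcases sublist_single hb' with rfl | rfl
      · rw [List.append_nil] at *
        exact ble_trans cs (ihS b (by omega) ω' rfl hω'red a ha) hble
      · -- τ₀ = a ++ [i]
        have hared : cs.IsReduced a := by
          have := CoxeterSystem.IsReduced.take hred₀ (j := a.length)
          rwa [List.take_left] at this
        have hπτ : π (a ++ [i]) = π a * σ i := by
          rw [cs.wordProd_append, cs.wordProd_singleton]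
        have hup : ℓ (π a) < ℓ (π a * σ i) := by
          have h1 : ℓ (π (a ++ [i])) = a.length + 1 := by
            rw [hred₀, List.length_append, List.length_singleton]
          rw [hπτ] at h1
          have h2 : ℓ (π a) = a.length := hared
          omega
        have hble2 : π a ≼ b := ihS b (by omega) ω' rfl hω'red a ha
        have := ihMax b (by omega) i (π a) hble2
        rw [umax_of_gt cs hup] at this
        have hbup : ℓ b < ℓ (b * σ i) := by rw [← hwprod]; omega
        rw [umax_of_gt cs hbup, ← hwprod] at this
        rwa [hπτ]
  refine ⟨hS, ?_, ?_⟩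
  · -- max monotone
    intro i v hv
    rcases Relation.ReflTransGen.cases_tail hv with rfl | ⟨z, hvz, hzw⟩
    · exact ble_refl cs _
    obtain ⟨t, ht, hwzt, hlt⟩ := hzw
    have hz : ℓ z < n := by omega
    refine ble_trans cs (ihMax z hz i v hvz) ?_
    -- edge case: umax i z ≼ umax i w
    rcases simple_lt_dichotomy cs z i with hzi | hzi
    · rcases simple_lt_dichotomy cs w i with hwi | hwi
      · -- both ascents
        rw [umax_of_gt cs hzi, umax_of_gt cs hwi]
        refine edge_le cs ⟨σ i * t * σ i, ?_, ?_, ?_⟩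
        · have := ht.conj (σ i)
          rwa [cs.inv_simple] at this
        · rw [hwzt]
          simp only [mul_assoc]
          rw [cs.simple_mul_simple_cancel_left]
        · have h5 : ℓ (z * σ i) = ℓ z + 1 := by
            rcases cs.length_mul_simple z i with hc | hc <;> omega
          have h6 : ℓ (w * σ i) = ℓ w + 1 := by
            rcases cs.length_mul_simple w i with hc | hc <;> omega
          omega
      · -- z ascent, w descent : z * σ i ≼ w
        rw [umax_of_gt cs hzi, umax_of_lt cs hwi]
        obtain ⟨ρ, hρred, hρ⟩ := cs.exists_reduced_word' (w * σ i)
        have hw1 : ℓ (w * σ i) + 1 = ℓ w := by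
          rcases cs.length_mul_simple w i with hc | hc <;> omega
        have hωprod : π (ρ ++ [i]) = w := by
          rw [cs.wordProd_append, cs.wordProd_singleton, ← hρ,
            cs.simple_mul_simple_cancel_right]
        have hωred : cs.IsReduced (ρ ++ [i]) := by
          show ℓ (π (ρ ++ [i])) = _
          rw [hωprod, List.length_append, List.length_singleton]
          have hl : ℓ (π ρ) = ρ.length := hρred
          rw [← hρ] at hl
          omega
        have hz_eq : z = w * t := by rw [hwzt, mul_assoc, ht.mul_self, mul_one]
        obtain ⟨j, hj, hdel⟩ := strong_exchange cs ht (by rw [← hz_eq]; omega)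
          (ρ ++ [i]) hωprod
        obtain ⟨τ, hτsub, hτred, hτprod⟩ := exists_reduced_sublist cs ((ρ ++ [i]).eraseIdx j)
        rw [hdel, ← hz_eq] at hτprod
        have hτsub' : τ <+ ρ ++ [i] := hτsub.trans (List.eraseIdx_sublist _ _)
        rcases List.sublist_append_iff.mp hτsub' with ⟨a, b', rfl, ha, hb'⟩
        rcases sublist_single hb' with rfl | rfl
        · rw [List.append_nil] at *
          have : π (a ++ [i]) = z * σ i := by
            rw [cs.wordProd_append, cs.wordProd_singleton, hτprod]
          rw [← this]
          exact hS (ρ ++ [i]) hωprod hωred _ (ha.append_right [i])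
        · -- contradiction with ascent
          exfalso
          have h1 : π (a ++ [i]) = π a * σ i := by
            rw [cs.wordProd_append, cs.wordProd_singleton]
          have h2 : ℓ z = a.length + 1 := by
            rw [← hτprod, hτred, List.length_append, List.length_singleton]
          have h3 : z * σ i = π a := by
            rw [← hτprod, h1, cs.simple_mul_simple_cancel_right]
          have h4 : ℓ (π a) ≤ a.length := cs.length_wordProd_le a
          rw [← h3] at h4
          omega
    · -- z descent : umax i z = z
      rw [umax_of_lt cs hzi]
      refine ble_trans cs (edge_le cs ⟨t, ht, hwzt, hlt⟩) (le_umax cs i w)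
  · -- min monotone
    intro i v hv
    rcases Relation.ReflTransGen.cases_tail hv with rfl | ⟨z, hvz, hzw⟩
    · exact ble_refl cs _
    obtain ⟨t, ht, hwzt, hlt⟩ := hzw
    have hz : ℓ z < n := by omega
    refine ble_trans cs (ihMin z hz i v hvz) ?_
    rcases simple_lt_dichotomy cs w i with hwi | hwi
    · -- w ascent : umin i w = w
      rw [umin_of_gt cs hwi]
      exact ble_trans cs (umin_le cs i z) (edge_le cs ⟨t, ht, hwzt, hlt⟩)
    · -- w descent
      rw [umin_of_lt cs hwi]
      obtain ⟨ρ, hρred, hρ⟩ := cs.exists_reduced_word' (w * σ i)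
      have hw1 : ℓ (w * σ i) + 1 = ℓ w := by
        rcases cs.length_mul_simple w i with hc | hc <;> omega
      have hωprod : π (ρ ++ [i]) = w := by
        rw [cs.wordProd_append, cs.wordProd_singleton, ← hρ,
          cs.simple_mul_simple_cancel_right]
      have hωred : cs.IsReduced (ρ ++ [i]) := by
        show ℓ (π (ρ ++ [i])) = _
        rw [hωprod, List.length_append, List.length_singleton]
        have hl : ℓ (π ρ) = ρ.length := hρred
        rw [← hρ] at hl
        omega
      have hz_eq : z = w * t := by rw [hwzt, mul_assoc, ht.mul_self, mul_one]
      obtain ⟨j, hj, hdel⟩ := strong_exchange cs ht (by rw [← hz_eq]; omega)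
        (ρ ++ [i]) hωprod
      obtain ⟨τ, hτsub, hτred, hτprod⟩ := exists_reduced_sublist cs ((ρ ++ [i]).eraseIdx j)
      rw [hdel, ← hz_eq] at hτprod
      have hτsub' : τ <+ ρ ++ [i] := hτsub.trans (List.eraseIdx_sublist _ _)
      have hwσlt : ℓ (w * σ i) < n := by omega
      rcases List.sublist_append_iff.mp hτsub' with ⟨a, b', rfl, ha, hb'⟩
      rcases sublist_single hb' with rfl | rfl
      · rw [List.append_nil] at *
        have hzle : z ≼ w * σ i := by
          rw [← hτprod]
          exact ihS (w * σ i) hwσlt ρ hρ.symm hρred _ ha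
        exact ble_trans cs (umin_le cs i z) hzle
      · -- τ = a ++ [i] : umin i z = z * σ i = π a ≼ w * σ i
        have h1 : π (a ++ [i]) = π a * σ i := by
          rw [cs.wordProd_append, cs.wordProd_singleton]
        have h3 : z * σ i = π a := by
          rw [← hτprod, h1, cs.simple_mul_simple_cancel_right]
        have h2 : ℓ z = a.length + 1 := by
          rw [← hτprod, hτred, List.length_append, List.length_singleton]
        have h4 : ℓ (π a) ≤ a.length := cs.length_wordProd_le a
        have hdesc : ℓ (z * σ i) < ℓ z := by
          rw [h3]; omega
        rw [umin_of_lt cs hdesc, h3]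
        exact ihS (w * σ i) hwσlt ρ hρ.symm hρred _ ha

theorem subword_le {ω τ : List B} (hred : cs.IsReduced ω) (h : τ <+ ω) : π τ ≼ π ω :=
  (master cs (ℓ (π ω)) _ rfl).1 ω rfl hred τ h

theorem max_mono {v w : W} (h : v ≼ w) (i : B) : umax cs i v ≼ umax cs i w :=
  (master cs (ℓ w) w rfl).2.1 i v h

theorem min_mono {v w : W} (h : v ≼ w) (i : B) : umin cs i v ≼ umin cs i w :=
  (master cs (ℓ w) w rfl).2.2 i v h

end Aux2

namespace Aux2
variable {B W : Type*} [Group W] {M : CoxeterMatrix B} (cs : CoxeterSystem M W)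

local prefix:100 "ℓ" => cs.length
local prefix:100 "σ" => cs.simple
local prefix:100 "π" => cs.wordProd
local infix:50 " ≼ " => BruhatLE cs

theorem lift_mul_le {v w : W} {i : B} (hv : v ≼ w) (hw : ℓ (w * σ i) < ℓ w) :
    v * σ i ≼ w := by
  have h := max_mono cs hv i
  rw [umax_of_lt cs hw] at h
  rcases simple_lt_dichotomy cs v i with ha | ha
  · rwa [umax_of_gt cs ha] at h
  · exact ble_trans cs (mul_simple_le cs ha) hv

theorem neg_one_pow_succ (k : ℕ) : ((-1 : ℤ)) ^ (k + 1) = -(-1) ^ k := by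
  rw [pow_succ]; ring

theorem sign_cancel {v : W} (i : B) :
    ((-1 : ℤ)) ^ ℓ v + (-1) ^ ℓ (v * σ i) = 0 := by
  rcases cs.length_mul_simple v i with h | h
  · rw [h, neg_one_pow_succ]; ring
  · have : ℓ v = ℓ (v * σ i) + 1 := by omega
    rw [this, neg_one_pow_succ]; ring

theorem mul_simple_ne (v : W) (i : B) : v * σ i ≠ v := by
  intro h
  exact cs.length_mul_simple_ne v i (by rw [h])

theorem mul_simple_mul_simple (v : W) (i : B) : v * σ i * σ i = v :=
  cs.simple_mul_simple_cancel_right i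

open Classical in
theorem euler [Fintype W] : ∀ n : ℕ, ∀ w : W, ℓ w = n → ∀ u : W, u ≼ w → u ≠ w →
    (∑ v ∈ Finset.univ.filter (fun v : W => u ≼ v ∧ v ≼ w), ((-1 : ℤ)) ^ ℓ v) = 0 := by
  intro n
  induction n using Nat.strong_induction_on with
  | _ n ih =>
  intro w hw u huw hne
  have hlen_lt : ℓ u < ℓ w := by
    rcases Nat.lt_or_ge (ℓ u) (ℓ w) with h | h
    · exact h
    · exact absurd (eq_of_le_of_length_ge cs huw h) hne
  have hw1 : w ≠ 1 := by
    intro h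
    rw [h, cs.length_one] at hlen_lt
    omega
  obtain ⟨i, hi⟩ := cs.exists_rightDescent_of_ne_one hw1
  have hi : ℓ (w * σ i) < ℓ w := hi
  have hwσ : ℓ (w * σ i) + 1 = ℓ w := by
    rcases cs.length_mul_simple w i with h | h <;> omega
  rcases simple_lt_dichotomy cs u i with hui | hui
  · -- Case A : ascent at u; full pairing
    apply Finset.sum_involution (g := fun v _ => v * σ i)
    · intro v _
      exact sign_cancel cs i
    · intro v _ _
      exact mul_simple_ne cs v i
    · intro v hv
      rw [Finset.mem_filter] at hv ⊢
      obtain ⟨-, huv, hvw⟩ := hv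
      refine ⟨Finset.mem_univ _, ?_, lift_mul_le cs hvw hi⟩
      -- u ≼ v * σ i
      rcases simple_lt_dichotomy cs v i with ha | ha
      · exact ble_trans cs huv (le_mul_simple cs ha)
      · have h := min_mono cs huv i
        rwa [umin_of_gt cs hui, umin_of_lt cs ha] at h
    · intro v _
      exact mul_simple_mul_simple cs v i
  · -- Case B : descent at u
    have huσ : ℓ (u * σ i) + 1 = ℓ u := by
      rcases cs.length_mul_simple u i with h | h <;> omega
    by_cases huw' : u = w * σ i
    · -- the interval is {w * σ i, w}
      have hset : (Finset.univ.filter (fun v : W => u ≼ v ∧ v ≼ w))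
          = {w * σ i, w} := by
        ext v
        simp only [Finset.mem_filter, Finset.mem_univ, true_and, Finset.mem_insert,
          Finset.mem_singleton]
        constructor
        · rintro ⟨huv, hvw⟩
          rcases Nat.lt_or_ge (ℓ v) (ℓ w) with h | h
          · left
            rw [← huw']
            have hlu : ℓ u = ℓ (w * σ i) := by rw [huw']
            exact (eq_of_le_of_length_ge cs huv (by omega)).symm
          · right
            exact eq_of_le_of_length_ge cs hvw h
        · rintro (rfl | rfl)
          · refine ⟨?_, mul_simple_le cs hi⟩
            rw [huw']
            exact ble_refl cs _
          · exact ⟨huw, ble_refl cs _⟩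
      rw [hset, Finset.sum_pair (mul_simple_ne cs w i)]
      have := sign_cancel cs (v := w * σ i) i
      rw [mul_simple_mul_simple cs w i] at this
      linarith
    · -- u ≠ w * σ i
      set S : Finset W := Finset.univ.filter (fun v : W => u ≼ v ∧ v ≼ w) with hS
      set L : Finset W := S.filter
        (fun v => ℓ (v * σ i) < ℓ v ∧ ¬ (u ≼ v * σ i)) with hL
      have hLS : L ⊆ S := Finset.filter_subset _ _
      have hsplit : (∑ v ∈ S \ L, ((-1:ℤ)) ^ ℓ v) + (∑ v ∈ L, ((-1:ℤ)) ^ ℓ v)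
          = ∑ v ∈ S, ((-1:ℤ)) ^ ℓ v := Finset.sum_sdiff hLS
      -- part 1 : sum over S \ L is zero by pairing
      have hpart1 : (∑ v ∈ S \ L, ((-1:ℤ)) ^ ℓ v) = 0 := by
        apply Finset.sum_involution (g := fun v _ => v * σ i)
        · intro v _
          exact sign_cancel cs i
        · intro v _ _
          exact mul_simple_ne cs v i
        · intro v hv
          rw [Finset.mem_sdiff, hS, Finset.mem_filter] at hv
          obtain ⟨⟨-, huv, hvw⟩, hvnotL⟩ := hv
          rw [hL, Finset.mem_filter] at hvnotL
          push_neg at hvnotL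
          rw [Finset.mem_sdiff]
          rcases simple_lt_dichotomy cs v i with ha | ha
          · -- ascent at v
            constructor
            · rw [hS, Finset.mem_filter]
              exact ⟨Finset.mem_univ _,
                ble_trans cs huv (le_mul_simple cs ha),
                lift_mul_le cs hvw hi⟩
            · rw [hL, Finset.mem_filter]
              rintro ⟨-, -, hcon⟩
              rw [mul_simple_mul_simple cs v i] at hcon
              exact hcon huv
          · -- descent at v with u ≼ v * σ i (since v ∉ L)
            have hmem : v ∈ S := by
              rw [hS, Finset.mem_filter]; exact ⟨Finset.mem_univ _, huv, hvw⟩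
            have huvσ : u ≼ v * σ i := by
              by_contra hcon
              exact hcon (hvnotL hmem ha)
            constructor
            · rw [hS, Finset.mem_filter]
              exact ⟨Finset.mem_univ _, huvσ,
                ble_trans cs (mul_simple_le cs ha) hvw⟩
            · rw [hL, Finset.mem_filter]
              rintro ⟨-, hcon, -⟩
              rw [mul_simple_mul_simple cs v i] at hcon
              omega
        · intro v _
          exact mul_simple_mul_simple cs v i
      -- the auxiliary set M
      set Mset : Finset W := Finset.univ.filter
        (fun y : W => (u * σ i) ≼ y ∧ y ≼ (w * σ i) ∧ ¬ (u ≼ y)) with hM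
      -- every member of M has an ascent at i
      have hMasc : ∀ y ∈ Mset, ℓ y < ℓ (y * σ i) ∧ u ≼ y * σ i := by
        intro y hy
        rw [hM, Finset.mem_filter] at hy
        obtain ⟨-, hu4, hy4, hnotu⟩ := hy
        have humax : umax cs i (u * σ i) = u := by
          have : ℓ (u * σ i * σ i) = ℓ u := by rw [mul_simple_mul_simple cs u i]
          rw [umax_of_gt cs (by omega), mul_simple_mul_simple cs u i]
        rcases simple_lt_dichotomy cs y i with ha | ha
        · -- ascent
          have h := max_mono cs hu4 i
          rw [humax, umax_of_gt cs ha] at h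
          exact ⟨ha, h⟩
        · -- descent at y : contradiction
          exfalso
          have h := max_mono cs hu4 i
          rw [humax, umax_of_lt cs ha] at h
          exact hnotu h
      -- part 2 : sum over L equals minus sum over M
      have hpart2 : (∑ v ∈ L, ((-1:ℤ)) ^ ℓ v)
          = ∑ y ∈ Mset, (-((-1:ℤ)) ^ ℓ y) := by
        refine Finset.sum_bij' (i := fun v _ => v * σ i) (j := fun y _ => y * σ i)
          ?_ ?_ ?_ ?_ ?_
        · -- maps L into M
          intro v hv
          rw [hL, Finset.mem_filter, hS, Finset.mem_filter] at hv
          obtain ⟨⟨-, huv, hvw⟩, hdesc, hnot⟩ := hv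
          rw [hM, Finset.mem_filter]
          refine ⟨Finset.mem_univ _, ?_, ?_, hnot⟩
          · have h := min_mono cs huv i
            rwa [umin_of_lt cs (by omega : ℓ (u * σ i) < ℓ u),
              umin_of_lt cs hdesc] at h
          · have h := min_mono cs hvw i
            rwa [umin_of_lt cs hdesc, umin_of_lt cs hi] at h
        · -- maps M into L
          intro y hy
          obtain ⟨hasc, huyσ⟩ := hMasc y hy
          rw [hM, Finset.mem_filter] at hy
          obtain ⟨-, hu4, hy4, hnotu⟩ := hy
          rw [hL, Finset.mem_filter, hS, Finset.mem_filter]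
          have hyw : y ≼ w := ble_trans cs hy4 (mul_simple_le cs hi)
          refine ⟨⟨Finset.mem_univ _, huyσ, lift_mul_le cs hyw hi⟩, ?_, ?_⟩
          · show ℓ (y * σ i * σ i) < ℓ (y * σ i)
            rw [mul_simple_mul_simple cs y i]; omega
          · show ¬ BruhatLE cs u (y * σ i * σ i)
            rw [mul_simple_mul_simple cs y i]; exact hnotu
        · intro v _
          exact mul_simple_mul_simple cs v i
        · intro y _
          exact mul_simple_mul_simple cs y i
        · intro v hv
          rw [hL, Finset.mem_filter] at hv
          obtain ⟨-, hdesc, -⟩ := hv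
          have : ℓ v = ℓ (v * σ i) + 1 := by
            rcases cs.length_mul_simple v i with h | h <;> omega
          rw [this, neg_one_pow_succ]
      -- part 3 : sum over M is zero
      have hpart3 : (∑ y ∈ Mset, ((-1:ℤ)) ^ ℓ y) = 0 := by
        set A : Finset W := Finset.univ.filter
          (fun y : W => (u * σ i) ≼ y ∧ y ≼ (w * σ i)) with hA
        set Bs : Finset W := Finset.univ.filter
          (fun y : W => u ≼ y ∧ y ≼ (w * σ i)) with hB
        have hBA : Bs ⊆ A := by
          intro y hy
          rw [hB, Finset.mem_filter] at hy
          rw [hA, Finset.mem_filter]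
          exact ⟨Finset.mem_univ _,
            ble_trans cs (mul_simple_le cs (by omega)) hy.2.1, hy.2.2⟩
        have hMAB : Mset = A \ Bs := by
          ext y
          rw [hM, Finset.mem_filter, Finset.mem_sdiff, hA, Finset.mem_filter,
            hB, Finset.mem_filter]
          constructor
          · rintro ⟨h1, h2, h3, h4⟩
            exact ⟨⟨h1, h2, h3⟩, by rintro ⟨-, h5, -⟩; exact h4 h5⟩
          · rintro ⟨⟨h1, h2, h3⟩, h4⟩
            refine ⟨h1, h2, h3, fun h5 => h4 ⟨h1, h5, h3⟩⟩
        have hsumA : (∑ y ∈ A, ((-1:ℤ)) ^ ℓ y) = 0 := by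
          have huσwσ : (u * σ i) ≼ (w * σ i) := by
            have h := min_mono cs huw i
            rwa [umin_of_lt cs (by omega : ℓ (u * σ i) < ℓ u),
              umin_of_lt cs hi] at h
          have hne2 : u * σ i ≠ w * σ i := by
            intro h
            have := congrArg (fun x => x * σ i) h
            simp only [mul_simple_mul_simple cs u i, mul_simple_mul_simple cs w i] at this
            exact hne this
          exact ih (ℓ (w * σ i)) (by omega) (w * σ i) rfl (u * σ i) huσwσ hne2
        have hsumB : (∑ y ∈ Bs, ((-1:ℤ)) ^ ℓ y) = 0 := by
          by_cases hc : u ≼ (w * σ i)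
          · exact ih (ℓ (w * σ i)) (by omega) (w * σ i) rfl u hc huw'
          · have : Bs = ∅ := by
              rw [Finset.eq_empty_iff_forall_notMem]
              intro y hy
              rw [hB, Finset.mem_filter] at hy
              exact hc (ble_trans cs hy.2.1 hy.2.2)
            rw [this, Finset.sum_empty]
        rw [hMAB, Finset.sum_sdiff_eq_sub hBA, hsumA, hsumB, sub_zero]
      rw [← hsplit, hpart1, hpart2, zero_add]
      have hfin : (∑ y ∈ Mset, -((-1:ℤ)) ^ ℓ y) = - ∑ y ∈ Mset, ((-1:ℤ)) ^ ℓ y :=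
        Finset.sum_neg_distrib _
      rw [hfin, hpart3, neg_zero]

end Aux2

namespace Aux2
variable {B W : Type*} [Group W] {M : CoxeterMatrix B} (cs : CoxeterSystem M W)

local prefix:100 "ℓ" => cs.length
local prefix:100 "σ" => cs.simple
local prefix:100 "π" => cs.wordProd
local infix:50 " ≼ " => BruhatLE cs

theorem prefix_le {ω : List B} (hred : cs.IsReduced ω) {a b : ℕ} (hab : a ≤ b) :
    π (ω.take a) ≼ π (ω.take b) := by
  have h1 : ω.take a = (ω.take b).take a := by
    rw [List.take_take, min_eq_left hab]
  rw [h1]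
  exact subword_le cs (CoxeterSystem.IsReduced.take hred b) (List.take_sublist _ _)

theorem take_le {ω : List B} (hred : cs.IsReduced ω) (a : ℕ) :
    π (ω.take a) ≼ π ω :=
  subword_le cs hred (List.take_sublist _ _)

theorem length_take_red {ω : List B} (hred : cs.IsReduced ω) {a : ℕ} (ha : a ≤ ω.length) :
    ℓ (π (ω.take a)) = a := by
  have h2 : ℓ (π (ω.take a)) = (ω.take a).length := CoxeterSystem.IsReduced.take hred a
  rw [List.length_take] at h2
  omega

theorem rank_two [Fintype W] {u z : W} (huz : u ≼ z) (hlen : ℓ z = ℓ u + 2) :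
    ∃ v₁ v₂ : W, v₁ ≠ v₂ ∧ v₁ ≼ z ∧ v₂ ≼ z ∧ ℓ v₁ = ℓ u + 1 ∧ ℓ v₂ = ℓ u + 1 := by
  classical
  set a := ℓ u with ha
  have hne : u ≠ z := by
    intro h; subst h; omega
  set S : Finset W := Finset.univ.filter (fun v : W => u ≼ v ∧ v ≼ z) with hS
  have hS0 : (∑ v ∈ S, ((-1:ℤ)) ^ ℓ v) = 0 := euler cs (ℓ z) z rfl u huz hne
  have hsub : ({u, z} : Finset W) ⊆ S := by
    intro v hv
    rw [Finset.mem_insert, Finset.mem_singleton] at hv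
    rw [hS, Finset.mem_filter]
    rcases hv with rfl | rfl
    · exact ⟨Finset.mem_univ _, ble_refl cs _, huz⟩
    · exact ⟨Finset.mem_univ _, huz, ble_refl cs _⟩
  set Mid : Finset W := S \ {u, z} with hMid
  have hmid_mem : ∀ v ∈ Mid, (u ≼ v ∧ v ≼ z) ∧ v ≠ u ∧ v ≠ z := by
    intro v hv
    rw [hMid, Finset.mem_sdiff, hS, Finset.mem_filter, Finset.mem_insert,
      Finset.mem_singleton] at hv
    push_neg at hv
    exact ⟨⟨hv.1.2.1, hv.1.2.2⟩, hv.2⟩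
  have hmid_len : ∀ v ∈ Mid, ℓ v = a + 1 := by
    intro v hv
    obtain ⟨⟨huv, hvz⟩, hvu, hvz'⟩ := hmid_mem v hv
    have h1 : a ≤ ℓ v := length_le_of_le cs huv
    have h2 : ℓ v ≤ a + 2 := by rw [← hlen]; exact length_le_of_le cs hvz
    rcases Nat.lt_or_ge (ℓ v) (a + 1) with h | h
    · exact absurd (eq_of_le_of_length_ge cs huv (by omega)).symm hvu
    rcases Nat.lt_or_ge (ℓ v) (a + 2) with h' | h'
    · omega
    · exact absurd (eq_of_le_of_length_ge cs hvz (by omega)) hvz'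
  have hsum2 : (∑ v ∈ Mid, ((-1:ℤ)) ^ ℓ v) + (∑ v ∈ ({u, z} : Finset W), ((-1:ℤ)) ^ ℓ v)
      = 0 := by rw [Finset.sum_sdiff hsub, hS0]
  have hpair : (∑ v ∈ ({u, z} : Finset W), ((-1:ℤ)) ^ ℓ v) = 2 * (-1) ^ a := by
    rw [Finset.sum_pair hne, hlen, pow_add]
    ring
  have hmidsum : (∑ v ∈ Mid, ((-1:ℤ)) ^ ℓ v) = (Mid.card : ℤ) * (-1) ^ (a + 1) := by
    rw [Finset.sum_congr rfl (fun v hv => by rw [hmid_len v hv])]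
    rw [Finset.sum_const, nsmul_eq_mul]
  have hcard : (Mid.card : ℤ) = 2 := by
    rw [hmidsum, hpair] at hsum2
    rcases Nat.even_or_odd a with he | ho
    · have e1 : ((-1:ℤ)) ^ a = 1 := he.neg_one_pow
      have e2 : ((-1:ℤ)) ^ (a + 1) = -1 := by rw [pow_succ, e1]; ring
      rw [e1, e2] at hsum2
      linarith
    · have e1 : ((-1:ℤ)) ^ a = -1 := ho.neg_one_pow
      have e2 : ((-1:ℤ)) ^ (a + 1) = 1 := by rw [pow_succ, e1]; ring
      rw [e1, e2] at hsum2
      linarith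
  have hcard' : 1 < Mid.card := by exact_mod_cast (by omega : (1:ℤ) < (Mid.card : ℤ))
  obtain ⟨v₁, hv₁, v₂, hv₂, hv12⟩ := Finset.one_lt_card.mp hcard'
  exact ⟨v₁, v₂, hv12, (hmid_mem v₁ hv₁).1.2, (hmid_mem v₂ hv₂).1.2,
    hmid_len v₁ hv₁, hmid_len v₂ hv₂⟩

theorem two_le_rank [Fintype W] {w : W} {k : ℕ} (h0 : 0 < k) (hk : k < ℓ w) :
    ∃ v₁ v₂ : W, v₁ ≠ v₂ ∧ v₁ ≼ w ∧ v₂ ≼ w ∧ ℓ v₁ = k ∧ ℓ v₂ = k := by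
  obtain ⟨ω, hred, hw⟩ := cs.exists_reduced_word' w
  have hlen : ω.length = ℓ w := hred.symm ▸ by rw [← hw]
  set u := π (ω.take (k - 1)) with hu
  set z := π (ω.take (k + 1)) with hz
  have hul : ℓ u = k - 1 := length_take_red cs hred (by omega)
  have hzl : ℓ z = k + 1 := length_take_red cs hred (by omega)
  have huz : u ≼ z := prefix_le cs hred (by omega)
  obtain ⟨v₁, v₂, h12, h1z, h2z, hl1, hl2⟩ := rank_two cs huz (by omega)
  have hzw : z ≼ w := by rw [hw]; exact take_le cs hred (k + 1)
  exact ⟨v₁, v₂, h12, ble_trans cs h1z hzw, ble_trans cs h2z hzw,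
    by omega, by omega⟩

end Aux2

theorem stmt0 {B W : Type*} [Group W] [Finite W] {M : CoxeterMatrix B}
    (cs : CoxeterSystem M W) (w : W) (n : ℕ) (hn : cs.length w = n) (hn1 : 1 ≤ n) :
    (∀ k : ℕ, 0 < k → k < n →
      2 ≤ Nat.card {v : W // BruhatLE cs v w ∧ cs.length v = k}) ∧
    (∀ m : ℕ,
      ((1 : Polynomial ℤ) + 2 * (∑ j ∈ Finset.Ico 1 n, X ^ j) + X ^ n).coeff m
        ≤ (∑ᶠ v ∈ {v : W | BruhatLE cs v w}, (X : Polynomial ℤ) ^ cs.length v).coeff m) ∧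
    2 * n ≤ Nat.card {v : W // BruhatLE cs v w} := by
  cases nonempty_fintype W
  classical
  have h1w : BruhatLE cs 1 w := by
    obtain ⟨ω, hred, hw⟩ := cs.exists_reduced_word' w
    have := Aux2.take_le cs hred 0
    rw [List.take_zero, cs.wordProd_nil, ← hw] at this
    exact this
  set F : Finset W := Finset.univ.filter (fun v : W => BruhatLE cs v w) with hF
  have hFmem : ∀ v : W, v ∈ F ↔ BruhatLE cs v w := by
    intro v; rw [hF, Finset.mem_filter]; simp
  have core : ∀ k : ℕ, 0 < k → k < n → ∃ v₁ v₂ : W, v₁ ≠ v₂ ∧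
      BruhatLE cs v₁ w ∧ BruhatLE cs v₂ w ∧ cs.length v₁ = k ∧ cs.length v₂ = k := by
    intro k h0 hk
    exact Aux2.two_le_rank cs h0 (by omega)
  have part1 : ∀ k : ℕ, 0 < k → k < n →
      2 ≤ Nat.card {v : W // BruhatLE cs v w ∧ cs.length v = k} := by
    intro k h0 hk
    obtain ⟨v₁, v₂, h12, h1, h2, hl1, hl2⟩ := core k h0 hk
    rw [Nat.card_eq_fintype_card, Fintype.card_subtype]
    have : 1 < (Finset.univ.filter (fun v : W => BruhatLE cs v w ∧ cs.length v = k)).card :=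
      Finset.one_lt_card.mpr ⟨v₁, by simp [h1, hl1], v₂, by simp [h2, hl2], h12⟩
    omega
  refine ⟨part1, ?_, ?_⟩
  · -- coefficients
    intro m
    have hset : {v : W | BruhatLE cs v w} = (↑F : Set W) := by
      ext v; simp [hF]
    rw [hset, finsum_mem_coe_finset]
    have hRHS : (∑ v ∈ F, (X : Polynomial ℤ) ^ cs.length v).coeff m
        = ((F.filter (fun v => m = cs.length v)).card : ℤ) := by
      rw [Polynomial.finset_sum_coeff]
      simp only [Polynomial.coeff_X_pow]
      rw [Finset.sum_boole]
    have hLHS : ((1 : Polynomial ℤ) + 2 * (∑ j ∈ Finset.Ico 1 n, X ^ j) + X ^ n).coeff m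
        = (if m = 0 then 1 else 0) + 2 * (if m ∈ Finset.Ico 1 n then 1 else 0)
          + (if m = n then 1 else 0) := by
      rw [two_mul]
      simp only [Polynomial.coeff_add, Polynomial.coeff_one, Polynomial.finset_sum_coeff,
        Polynomial.coeff_X_pow]
      rw [Finset.sum_ite_eq]
      ring
    rw [hRHS, hLHS]
    by_cases hm0 : m = 0
    · subst hm0
      rw [if_pos rfl, if_neg (by simp), if_neg (by omega)]
      have hmem : (1 : W) ∈ F.filter (fun v => 0 = cs.length v) := by
        simp [hFmem, h1w, cs.length_one]
      have := Finset.card_pos.mpr ⟨1, hmem⟩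
      have : (1 : ℤ) ≤ ((F.filter (fun v => 0 = cs.length v)).card : ℤ) := by
        exact_mod_cast this
      linarith
    · by_cases hmn : m = n
      · subst hmn
        rw [if_neg hm0, if_neg (by simp), if_pos rfl]
        have hmem : w ∈ F.filter (fun v => m = cs.length v) := by
          simp [hFmem, hn]
          exact Relation.ReflTransGen.refl
        have := Finset.card_pos.mpr ⟨w, hmem⟩
        have : (1 : ℤ) ≤ ((F.filter (fun v => m = cs.length v)).card : ℤ) := by
          exact_mod_cast this
        linarith
      · by_cases hmid : m < n
        · rw [if_neg hm0, if_pos (by simp; omega), if_neg hmn]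
          obtain ⟨v₁, v₂, h12, h1, h2, hl1, hl2⟩ := core m (by omega) hmid
          have : 1 < (F.filter (fun v => m = cs.length v)).card :=
            Finset.one_lt_card.mpr ⟨v₁, by simp [hFmem, h1, hl1], v₂,
              by simp [hFmem, h2, hl2], h12⟩
          have : (2 : ℤ) ≤ ((F.filter (fun v => m = cs.length v)).card : ℤ) := by
            exact_mod_cast this
          linarith
        · rw [if_neg hm0, if_neg (by simp; omega), if_neg hmn]
          have : (0 : ℤ) ≤ ((F.filter (fun v => m = cs.length v)).card : ℤ) := by positivity
          linarith
  · -- cardinality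
    rw [Nat.card_eq_fintype_card, Fintype.card_subtype]
    have hfib := Finset.card_eq_sum_card_fiberwise
      (f := cs.length) (s := F) (t := Finset.range (n + 1))
      (by
        intro v hv
        rw [Finset.mem_coe, hFmem] at hv
        have := Aux2.length_le_of_le cs hv
        rw [Finset.mem_coe, Finset.mem_range]
        omega)
    rw [← hF, hfib]
    have hbound : ∀ k ∈ Finset.range (n + 1),
        (if 0 < k ∧ k < n then 2 else 1) ≤ (F.filter (fun v => cs.length v = k)).card := by
      intro k hk
      rw [Finset.mem_range] at hk
      by_cases hmid : 0 < k ∧ k < n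
      · rw [if_pos hmid]
        obtain ⟨v₁, v₂, h12, h1, h2, hl1, hl2⟩ := core k hmid.1 hmid.2
        have : 1 < (F.filter (fun v => cs.length v = k)).card :=
          Finset.one_lt_card.mpr ⟨v₁, by simp [hFmem, h1, hl1], v₂,
            by simp [hFmem, h2, hl2], h12⟩
        omega
      · rw [if_neg hmid]
        push_neg at hmid
        refine Finset.card_pos.mpr ?_
        by_cases hk0 : k = 0
        · exact ⟨1, by simp [hFmem, h1w, cs.length_one, hk0]⟩
        · have hkn : k = n := by omega
          exact ⟨w, by
            simp [hFmem, hn, hkn]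
            exact Relation.ReflTransGen.refl⟩
    have hsumlow := Finset.sum_le_sum hbound
    have hcompute : (∑ k ∈ Finset.range (n + 1), (if 0 < k ∧ k < n then 2 else 1)) = 2 * n := by
      have hsplit2 : ∀ k : ℕ, (if 0 < k ∧ k < n then (2:ℕ) else 1)
          = 1 + (if 0 < k ∧ k < n then 1 else 0) := by
        intro k
        by_cases h : 0 < k ∧ k < n <;> simp [h]
      rw [Finset.sum_congr rfl (fun k _ => hsplit2 k), Finset.sum_add_distrib,
        Finset.sum_const, Finset.sum_boole]
      have hfe : Finset.filter (fun k => 0 < k ∧ k < n) (Finset.range (n + 1))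
          = Finset.Ico 1 n := by
        ext k
        simp only [Finset.mem_filter, Finset.mem_range, Finset.mem_Ico]
        omega
      rw [hfe, Nat.card_Ico, Finset.card_range]
      simp
      omega
    omega
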